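/- Let X be the topological space on {m_i : i ∈ ℕ ∪ {∞}} ∪ {p_j : j ≥ 1} whose closed sets are the specialization-stable subsets that are finite or contain m_∞. Then X is not a noetherian topological space; specifically, the open subset X \ {m_∞} is not quasi-compact. -/
import Mathlib


open Topology

/-- The points of the space: `m i` for `i ∈ ℕ ∪ {∞}` and `p j` for `j ≥ 1`. -/
inductive Pt : Type where
  | m : ℕ∞ → Pt
  | p : ℕ+ → Pt

/-- Closed sets: specialization-stable subsets that are finite or contain `m ∞`. -/
def ClosedCond (Z : Set Pt) : Prop :=
  (∀ j : ℕ+, Pt.p j ∈ Z →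
      Pt.m (((j : ℕ) - 1 : ℕ) : ℕ∞) ∈ Z ∧ Pt.m ((j : ℕ) : ℕ∞) ∈ Z) ∧
  (Z.Finite ∨ Pt.m ⊤ ∈ Z)

/-- Auxiliary closed sets: `{m i : i ≥ n} ∪ {p j : j > n}`. -/
def Zset (n : ℕ) : Set Pt :=
  {x | match x with
    | .m i => (n : ℕ∞) ≤ i
    | .p j => n < (j : ℕ)}

/-- `X` is not noetherian; specifically the open set `X \ {m ∞}` is not quasi-compact. -/
theorem stmt_8 [t : TopologicalSpace Pt]
    (ht : ∀ Z : Set Pt, IsClosed Z ↔ ClosedCond Z) :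
    ¬ TopologicalSpace.NoetherianSpace Pt ∧
    (IsOpen ({Pt.m ⊤}ᶜ : Set Pt) ∧ ¬ IsCompact ({Pt.m ⊤}ᶜ : Set Pt)) := by
  have hopen : IsOpen ({Pt.m ⊤}ᶜ : Set Pt) := by
    rw [isOpen_compl_iff, ht]
    refine ⟨fun j hj => ?_, Or.inr rfl⟩
    · simp only [Set.mem_singleton_iff] at hj
      exact absurd hj (by simp)
  have hclosedZ : ∀ n, IsClosed (Zset n) := by
    intro n
    rw [ht]
    refine ⟨fun j hj => ?_, Or.inr ?_⟩
    · simp only [Zset, Set.mem_setOf_eq] at hj ⊢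
      refine ⟨?_, ?_⟩
      · exact_mod_cast Nat.le_sub_one_of_lt hj
      · exact_mod_cast hj.le
    · simp [Zset]
  have hncomp : ¬ IsCompact ({Pt.m ⊤}ᶜ : Set Pt) := by
    intro hc
    have hcov : ({Pt.m ⊤}ᶜ : Set Pt) ⊆ ⋃ n : ℕ, (Zset n)ᶜ := by
      intro x hx
      cases x with
      | m i =>
        cases i with
        | top => exact absurd rfl hx
        | coe k =>
          simp only [Set.mem_iUnion]
          exact ⟨k + 1, by simp [Zset]; exact_mod_cast Nat.lt_succ_self k⟩
      | p j =>
        simp only [Set.mem_iUnion]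
        exact ⟨(j : ℕ), by simp [Zset]⟩
    obtain ⟨s, hs⟩ := hc.elim_finite_subcover (fun n => (Zset n)ᶜ)
      (fun n => (hclosedZ n).isOpen_compl) hcov
    set N := s.sup id with hN
    have hmem : Pt.m (N : ℕ∞) ∈ ({Pt.m ⊤}ᶜ : Set Pt) := by
      simp [Pt.m.injEq]
    have h2 := hs hmem
    simp only [Set.mem_iUnion] at h2
    obtain ⟨n, hn, hmem'⟩ := h2
    apply hmem'
    simp only [Zset, Set.mem_setOf_eq]
    exact_mod_cast Finset.le_sup (f := id) hn
  refine ⟨fun hN => hncomp (TopologicalSpace.NoetherianSpace.isCompact _), hopen, hncomp⟩
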